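/- There exist a finite stimulus set S with prior p and a conditional distribution P(r₁,r₂|s) on a finite product 𝓡₁×𝓡₂ such that I(S;R^ni) > I(S;R), where R^ni has conditional law P^ni(r₁,r₂|s) = P₁(r₁|s)P₂(r₂|s) with P₁, P₂ the coordinate marginals of P(·|s). Consequently, for this instance no row-stochastic matrix Q satisfies P^ni(r̃|s) = ∑_r P(r|s)Q(r̃|r) for all s with p(s) > 0 and all r̃. (First part of Theorem 1: the noise-independent surrogate may not be related to the actual responses through any stochastic code.) -/

import Mathlib

open scoped BigOperators

/-- Mutual information of `S` with a code having conditional distribution `G(x|s)`: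
`I = ∑_{s,x} p(s) G(x|s) log (G(x|s) / ∑_{s'} p(s') G(x|s'))`, with `0·log 0 = 0`. -/
noncomputable def mutInfo {S X : Type*} [Fintype S] [Fintype X]
    (p : S → ℝ) (G : S → X → ℝ) : ℝ :=
  ∑ s, ∑ x, p s * G s x * Real.log (G s x / ∑ s', p s' * G s' x)

/-- First coordinate marginal of a conditional distribution on a product. -/
noncomputable def marg1 {S A B : Type*} [Fintype B]
    (P : S → A × B → ℝ) (s : S) (a : A) : ℝ := ∑ b, P s (a, b)

/-- Second coordinate marginal of a conditional distribution on a product. -/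
noncomputable def marg2 {S A B : Type*} [Fintype A]
    (P : S → A × B → ℝ) (s : S) (b : B) : ℝ := ∑ a, P s (a, b)

/-- Noise-independent surrogate `P^ni(r₁,r₂|s) = P₁(r₁|s) P₂(r₂|s)`. -/
noncomputable def pNI2 {S A B : Type*} [Fintype A] [Fintype B]
    (P : S → A × B → ℝ) (s : S) (r : A × B) : ℝ :=
  marg1 P s r.1 * marg2 P s r.2

/-- There is an instance in which the noise-independent surrogate
carries strictly more information than the actual responses, `I(S;R^ni) > I(S;R)`;
consequently, for this instance no row-stochastic matrix maps the actual responses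
onto the surrogate ones in a stimulus-independent manner. -/
theorem noise_independent_surrogate_not_a_stochastic_code :
    ∃ (nS nA nB : ℕ) (p : Fin nS → ℝ) (P : Fin nS → Fin nA × Fin nB → ℝ),
      (∀ s, 0 ≤ p s) ∧ (∑ s, p s = 1) ∧
      (∀ s r, 0 ≤ P s r) ∧ (∀ s, ∑ r, P s r = 1) ∧
      mutInfo p P < mutInfo p (pNI2 P) ∧
      ¬ ∃ Q : Fin nA × Fin nB → Fin nA × Fin nB → ℝ,
          (∀ r rt, 0 ≤ Q r rt) ∧ (∀ r, ∑ rt, Q r rt = 1) ∧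
          (∀ s, 0 < p s → ∀ rt, pNI2 P s rt = ∑ r, P s r * Q r rt) := by
  refine ⟨2, 2, 2, fun _ => 1/2,
    fun s r => if s = 0 then (if r.1 = r.2 then 1/2 else 0)
               else (if r.1 = 0 ∧ r.2 = 0 then 1 else 0),
    fun s => by norm_num, by norm_num [Fin.sum_univ_two],
    fun s r => by dsimp only; split <;> split <;> norm_num,
    fun s => by
      fin_cases s <;>
        · simp only [Fintype.sum_prod_type, Fin.sum_univ_two]; norm_num,
    ?_, ?_⟩
  · -- mutual information inequality
    have hL : mutInfo (fun _ => (1:ℝ)/2)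
        (fun (s : Fin 2) (r : Fin 2 × Fin 2) => if s = 0 then (if r.1 = r.2 then 1/2 else 0)
               else (if r.1 = 0 ∧ r.2 = 0 then 1 else 0))
        = 1/4 * Real.log (2/3) + 1/4 * Real.log 2 + 1/2 * Real.log (4/3) := by
      simp only [mutInfo, Fin.sum_univ_two, Fintype.sum_prod_type]
      norm_num
    have hR : mutInfo (fun _ => (1:ℝ)/2)
        (pNI2 (fun (s : Fin 2) (r : Fin 2 × Fin 2) => if s = 0 then (if r.1 = r.2 then 1/2 else 0)
               else (if r.1 = 0 ∧ r.2 = 0 then 1 else 0)))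
        = 1/8 * Real.log (2/5) + 3/8 * Real.log 2 + 1/2 * Real.log (8/5) := by
      simp only [mutInfo, pNI2, marg1, marg2, Fin.sum_univ_two, Fintype.sum_prod_type]
      norm_num
      ring
    rw [hL, hR]
    have e1 : Real.log ((2:ℝ)/3) = Real.log 2 - Real.log 3 :=
      Real.log_div (by norm_num) (by norm_num)
    have e2 : Real.log ((4:ℝ)/3) = 2 * Real.log 2 - Real.log 3 := by
      rw [Real.log_div (by norm_num) (by norm_num),
        show (4:ℝ) = 2^2 by norm_num, Real.log_pow]; push_cast; ring
    have e3 : Real.log ((2:ℝ)/5) = Real.log 2 - Real.log 5 :=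
      Real.log_div (by norm_num) (by norm_num)
    have e4 : Real.log ((8:ℝ)/5) = 3 * Real.log 2 - Real.log 5 := by
      rw [Real.log_div (by norm_num) (by norm_num),
        show (8:ℝ) = 2^3 by norm_num, Real.log_pow]; push_cast; ring
    have key : Real.log 3125 < Real.log 11664 :=
      Real.log_lt_log (by norm_num) (by norm_num)
    have k1 : Real.log (3125:ℝ) = 5 * Real.log 5 := by
      rw [show (3125:ℝ) = 5^5 by norm_num, Real.log_pow]; push_cast; ring
    have k2 : Real.log (11664:ℝ) = 4 * Real.log 2 + 6 * Real.log 3 := by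
      rw [show (11664:ℝ) = 2^4 * 3^6 by norm_num, Real.log_mul (by norm_num) (by norm_num),
        Real.log_pow, Real.log_pow]; push_cast; ring
    rw [e1, e2, e3, e4]
    linarith
  · -- no stochastic code
    rintro ⟨Q, hnn, -, heq⟩
    have h1 := heq 1 (by norm_num) ((0 : Fin 2), (0 : Fin 2))
    have h0 := heq 0 (by norm_num) ((0 : Fin 2), (0 : Fin 2))
    simp only [pNI2, marg1, marg2, Fin.sum_univ_two, Fintype.sum_prod_type] at h1 h0
    norm_num at h1 h0
    have := hnn ((1 : Fin 2), (1 : Fin 2)) ((0 : Fin 2), (0 : Fin 2))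
    linarith
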